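/- Let p be an odd prime and n ≥ p². In the symmetric group S_n, a cycle of length p² has centralizer isomorphic to C_{p²} × S_{n−p²}, and consequently its conjugacy class size is divisible by p. Hence the alternating group A_n is not cl_p for any n and odd prime p. -/

import Mathlib

open Equiv Equiv.Perm

/-- `permCongr` as a `MulEquiv`. -/
def permCongrHom {α β : Type*} (e : α ≃ β) : Perm α ≃* Perm β where
  toEquiv := e.permCongr
  map_mul' f g := by
    ext b
    simp [Equiv.permCongr_apply]

/-- A `p`-subgroup of a permutation group on fewer than `p²` points is commutative. -/
lemma comm_of_small {p m : ℕ} (hp : p.Prime) (hm : m < p ^ 2)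
    (Q : Subgroup (Perm (Fin m))) (hQ : IsPGroup p Q) (g h : Q) : g * h = h * g := by
  haveI : Fact p.Prime := ⟨hp⟩
  obtain ⟨k, hk⟩ := IsPGroup.iff_card.mp hQ
  suffices hsuff : ∀ x : Fin m, (g : Perm (Fin m)) ((h : Perm (Fin m)) x)
      = (h : Perm (Fin m)) ((g : Perm (Fin m)) x) by
    apply Subtype.ext
    push_cast
    exact Equiv.ext hsuff
  intro x
  set O := MulAction.orbit Q x with hO
  have hxO : x ∈ O := MulAction.mem_orbit_self x
  have hcardO : Nat.card O = (MulAction.stabilizer Q x).index := by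
    rw [Nat.card_congr (MulAction.orbitEquivQuotientStabilizer Q x), Subgroup.index_eq_card]
  have hdvd1 : Nat.card O ∣ p ^ k := by
    rw [hcardO, ← hk]; exact Subgroup.index_dvd_card _
  have hle : Nat.card O ≤ m := by
    have := Nat.card_le_card_of_injective (Subtype.val : O → Fin m) Subtype.val_injective
    simpa using this
  obtain ⟨a, hak, hcard⟩ := (Nat.dvd_prime_pow hp).mp hdvd1
  have ha1 : a ≤ 1 := by
    by_contra hcon
    have : p ^ 2 ≤ p ^ a := Nat.pow_le_pow_right hp.pos (by omega)
    omega
  have hOp : Nat.card O ∣ p := by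
    rw [hcard]
    calc p ^ a ∣ p ^ 1 := pow_dvd_pow p ha1
    _ = p := pow_one p
  set φ := MulAction.toPermHom Q O with hφ
  set H := φ.range with hH
  have hHdvd : Nat.card H ∣ p ^ k := by
    rw [← hk]; exact Subgroup.card_dvd_of_surjective φ.rangeRestrict φ.rangeRestrict_surjective
  have hHfact : Nat.card H ∣ Nat.factorial p := by
    have h1 : Nat.card H ∣ Nat.card (Perm O) := Subgroup.card_subgroup_dvd_card _
    have h2 : Nat.card (Perm O) = Nat.factorial (Nat.card O) := by
      haveI : Fintype O := Fintype.ofFinite O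
      classical
      rw [Nat.card_eq_fintype_card, Fintype.card_perm, Nat.card_eq_fintype_card]
    have h3 : Nat.factorial (Nat.card O) ∣ Nat.factorial p :=
      Nat.factorial_dvd_factorial (Nat.le_of_dvd hp.pos hOp)
    exact (h2 ▸ h1).trans h3
  obtain ⟨b, hbk, hHb⟩ := (Nat.dvd_prime_pow hp).mp hHdvd
  have hb1 : b ≤ 1 := by
    by_contra hcon
    have hpp : p * p ∣ Nat.factorial p := by
      calc p * p = p ^ 2 := (sq p).symm
      _ ∣ p ^ b := pow_dvd_pow p (by omega)
      _ = Nat.card H := hHb.symm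
      _ ∣ Nat.factorial p := hHfact
    have hfac : Nat.factorial p = p * Nat.factorial (p-1) := by
      obtain ⟨q, rfl⟩ := Nat.exists_eq_succ_of_ne_zero hp.pos.ne'
      simp [Nat.factorial_succ]
    rw [hfac] at hpp
    have h4 : p ∣ Nat.factorial (p-1) := (Nat.mul_dvd_mul_iff_left hp.pos).mp hpp
    have h5 := (Nat.Prime.dvd_factorial hp).mp h4
    have := hp.two_le
    omega
  haveI : IsCyclic H := by
    interval_cases b
    · haveI : Subsingleton H := by
        rw [pow_zero] at hHb
        exact Nat.card_eq_one_iff_unique.mp hHb |>.1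
      infer_instance
    · exact isCyclic_of_prime_card (by simpa using hHb)
  letI : CommGroup H := IsCyclic.commGroup
  have hmemg : φ g ∈ H := ⟨g, rfl⟩
  have hmemh : φ h ∈ H := ⟨h, rfl⟩
  have hcomm : (⟨φ g, hmemg⟩ : H) * ⟨φ h, hmemh⟩ = ⟨φ h, hmemh⟩ * ⟨φ g, hmemg⟩ :=
    mul_comm _ _
  have hcomm' : φ g * φ h = φ h * φ g := by
    simpa [Subtype.ext_iff] using hcomm
  have := congrFun (congrArg (fun (π : Perm O) => (π : O → O)) hcomm') ⟨x, hxO⟩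
  have hval := congrArg (Subtype.val : O → Fin m) this
  exact hval

lemma pow_val_add {G : Type*} [Group G] {N : ℕ} [NeZero N] (σ : G)
    (horder : orderOf σ = N) (a b : ZMod N) :
    σ ^ (a + b).val = σ ^ a.val * σ ^ b.val := by
  rw [ZMod.val_add, ← pow_add]
  conv_rhs => rw [← pow_mod_orderOf]
  rw [horder]

lemma ofSubtype_eq_one {α : Type*} {q : α → Prop} [DecidablePred q]
    {f : Perm (Subtype q)} (h : Equiv.Perm.ofSubtype f = 1) : f = 1 := by
  ext y
  have := congrFun (congrArg (fun (π : Perm α) => (π : α → α)) h) (y : α)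
  simp only [Equiv.Perm.ofSubtype_apply_coe, Perm.one_apply] at this
  simpa [Subtype.ext_iff] using this

/-- The centralizer of a `p²`-cycle is `C_{p²} × S_{n-p²}`. -/
lemma centralizer_cycle_iso {p n : ℕ} (hp : p.Prime) (hn : p ^ 2 ≤ n) (σ : Perm (Fin n))
    (hσ : σ.IsCycle) (hcard : σ.support.card = p ^ 2) :
    Nonempty ((Subgroup.centralizer {σ} : Subgroup (Perm (Fin n))) ≃*
        Multiplicative (ZMod (p ^ 2)) × Perm (Fin (n - p ^ 2))) := by
  haveI : NeZero (p ^ 2) := ⟨pow_ne_zero 2 hp.pos.ne'⟩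
  have horder : orderOf σ = p ^ 2 := (hσ.orderOf).trans hcard
  have hcompl : Fintype.card ((σ.supportᶜ : Finset (Fin n)) : Finset (Fin n)) = n - p ^ 2 := by
    rw [Fintype.card_coe, Finset.card_compl, hcard, Fintype.card_fin]
  set e : Fin (n - p ^ 2) ≃ (σ.supportᶜ : Finset (Fin n)) :=
    (Fintype.equivFinOfCardEq hcompl).symm with he
  set Φ₁ : Multiplicative (ZMod (p ^ 2)) →* Perm (Fin n) :=
    { toFun := fun k => σ ^ (Multiplicative.toAdd k).val
      map_one' := by simp
      map_mul' := fun a b => pow_val_add σ horder _ _ } with hΦ₁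
  set Φ₂ : Perm (Fin (n - p ^ 2)) →* Perm (Fin n) :=
    (ofSubtype (p := fun x => x ∈ (σ.supportᶜ : Finset (Fin n)))).comp
      (_root_.permCongrHom e).toMonoidHom with hΦ₂
  have hΦ₂apply : ∀ u, Φ₂ u = ofSubtype ((_root_.permCongrHom e) u) := fun u => rfl
  have hdisj : ∀ (v : ℕ) (u : Perm (σ.supportᶜ : Finset (Fin n))),
      Disjoint (σ ^ v) (ofSubtype u) := by
    intro v u x
    by_cases hx : x ∈ σ.support
    · right
      exact ofSubtype_apply_of_not_mem u (by simp [hx])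
    · left
      exact notMem_support.mp (fun hmem => hx (support_pow_le σ v hmem))
  have hcomm : ∀ (k : Multiplicative (ZMod (p ^ 2))) (u : Perm (Fin (n - p ^ 2))),
      Commute (Φ₁ k) (Φ₂ u) := by
    intro k u
    exact (hdisj _ _).commute
  set Φ := MonoidHom.noncommCoprod Φ₁ Φ₂ hcomm with hΦ
  have hΦapply : ∀ k u, Φ (k, u) = Φ₁ k * Φ₂ u := fun k u => rfl
  -- injectivity
  have hinj : Function.Injective Φ := by
    rw [injective_iff_map_eq_one]
    rintro ⟨k, u⟩ hku
    rw [hΦapply] at hku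
    have hd := hdisj (Multiplicative.toAdd k).val ((_root_.permCongrHom e) u)
    rw [← hΦ₂apply] at hd
    have happ : ∀ x, Φ₁ k (Φ₂ u x) = x := by
      intro x
      have := congrFun (congrArg (fun (π : Perm (Fin n)) => (π : Fin n → Fin n)) hku) x
      simpa using this
    have h1 : Φ₁ k = 1 ∧ Φ₂ u = 1 := by
      constructor
      · apply Equiv.ext
        intro x
        rw [Perm.one_apply]
        rcases hd x with hx | hx
        · exact hx
        · have h2 := happ x
          rwa [hx] at h2
      · apply Equiv.ext
        intro x
        rw [Perm.one_apply]
        rcases hd x with hx | hx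
        · have h2 : Φ₁ k (Φ₂ u x) = Φ₂ u x := by
            rcases hd (Φ₂ u x) with hy | hy
            · exact hy
            · have h3 := (Φ₂ u).injective hy
              rw [h3] at hy ⊢
              exact hx
          have := happ x
          rwa [h2] at this
        · exact hx
    have hk1 : k = 1 := by
      have h4 : σ ^ (Multiplicative.toAdd k).val = 1 := h1.1
      have hdv : orderOf σ ∣ (Multiplicative.toAdd k).val := orderOf_dvd_of_pow_eq_one h4
      rw [horder] at hdv
      have hlt : (Multiplicative.toAdd k).val < p ^ 2 := ZMod.val_lt _
      have h5 : (Multiplicative.toAdd k).val = 0 := Nat.eq_zero_of_dvd_of_lt hdv hlt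
      have h6 : Multiplicative.toAdd k = 0 := (ZMod.val_eq_zero _).mp h5
      simpa using h6
    have hu1 : u = 1 := by
      have h2 : (_root_.permCongrHom e) u = 1 := ofSubtype_eq_one (h1.2)
      simpa using congrArg (_root_.permCongrHom e).symm h2
    simp [Prod.ext_iff, hk1, hu1]
  -- range
  have hrange : Φ.range = Subgroup.centralizer {σ} := by
    apply le_antisymm
    · rintro g ⟨⟨k, u⟩, rfl⟩
      rw [Subgroup.mem_centralizer_singleton_iff]
      rw [hΦapply]
      have c1 : Commute (Φ₁ k) σ := (Commute.refl σ).pow_left _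
      have c2 : Commute (Φ₂ u) σ := by
        have h7 := (hdisj 1 ((_root_.permCongrHom e) u)).commute.symm
        rwa [pow_one, ← hΦ₂apply] at h7
      exact (c1.mul_left c2)
    · intro g hg
      rw [Subgroup.mem_centralizer_singleton_iff] at hg
      obtain ⟨hs, hz⟩ := hσ.commute_iff.mp hg
      obtain ⟨j, hj⟩ := Subgroup.mem_zpowers_iff.mp hz
      have hs' : ∀ x : Fin n, g x ∈ (σ.supportᶜ : Finset (Fin n)) ↔
          x ∈ (σ.supportᶜ : Finset (Fin n)) := by
        intro x
        simp only [Finset.mem_compl]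
        exact not_congr (hs x)
      set k : ZMod (p ^ 2) := (j : ZMod (p ^ 2)) with hk
      have hΦ₁k : Φ₁ (Multiplicative.ofAdd k) = ofSubtype (g.subtypePerm hs) := by
        rw [← hj]
        show σ ^ (k.val : ℕ) = σ ^ j
        have hv : ((k.val : ℕ) : ℤ) = j % ((p ^ 2 : ℕ) : ℤ) := ZMod.val_intCast j
        rw [← zpow_natCast, zpow_eq_zpow_iff_modEq, horder, hv]
        exact Int.emod_emod_of_dvd j dvd_rfl
      set u : Perm (Fin (n - p ^ 2)) := (_root_.permCongrHom e).symm (g.subtypePerm hs') with hu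
      refine ⟨(Multiplicative.ofAdd k, u), ?_⟩
      rw [hΦapply, hΦ₁k, hΦ₂apply, hu, MulEquiv.apply_symm_apply]
      apply Equiv.ext
      intro x
      by_cases hx : x ∈ σ.support
      · rw [Equiv.Perm.mul_apply,
          ofSubtype_apply_of_not_mem (g.subtypePerm hs') (by simp [hx]),
          ofSubtype_subtypePerm_of_mem hs hx]
      · rw [Equiv.Perm.mul_apply,
          ofSubtype_subtypePerm_of_mem hs' (show x ∈ σ.supportᶜ by simp [hx]),
          ofSubtype_apply_of_not_mem (g.subtypePerm hs) ((hs x).not.mpr hx)]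
  exact ⟨(MulEquiv.subgroupCongr hrange.symm).trans (MonoidHom.ofInjective hinj).symm⟩

lemma pow_dvd_factorial_mul {p : ℕ} (hp : 0 < p) : ∀ k : ℕ, p ^ k ∣ Nat.factorial (k * p)
  | 0 => by simp
  | (k + 1) => by
    have h1 : p ^ k * Nat.factorial p ∣ Nat.factorial (k * p) * Nat.factorial p :=
      mul_dvd_mul_right (pow_dvd_factorial_mul hp k) _
    have h2 : Nat.factorial (k * p) * Nat.factorial p ∣ Nat.factorial (k * p + p) :=
      Nat.factorial_mul_factorial_dvd_factorial_add _ _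
    have h3 : p ∣ Nat.factorial p := Nat.dvd_factorial hp le_rfl
    calc p ^ (k + 1) = p ^ k * p := by ring
    _ ∣ p ^ k * Nat.factorial p := mul_dvd_mul_left _ h3
    _ ∣ Nat.factorial (k * p + p) := h1.trans h2
    _ = Nat.factorial ((k + 1) * p) := by ring_nf

lemma p_dvd_centralizer_index {p n : ℕ} (hp : p.Prime) (hp3 : 3 ≤ p) (hn : p ^ 2 ≤ n)
    (σ : Perm (Fin n)) (hσ : σ.IsCycle) (hcard : σ.support.card = p ^ 2) :
    p ∣ (Subgroup.centralizer {σ} : Subgroup (Perm (Fin n))).index := by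
  obtain ⟨ψ⟩ := centralizer_cycle_iso hp hn σ hσ hcard
  have hcardC : Nat.card (Subgroup.centralizer {σ} : Subgroup (Perm (Fin n)))
      = p ^ 2 * Nat.factorial (n - p ^ 2) := by
    rw [Nat.card_congr ψ.toEquiv, Nat.card_prod, Nat.card_congr (Multiplicative.toAdd),
      Nat.card_zmod, Nat.card_eq_fintype_card, Fintype.card_perm, Fintype.card_fin]
  have hmul := Subgroup.card_mul_index (Subgroup.centralizer {σ} : Subgroup (Perm (Fin n)))
  rw [hcardC, Nat.card_eq_fintype_card, Fintype.card_perm, Fintype.card_fin] at hmul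
  -- p * (p ^ 2 * (n - p ^ 2)!) ∣ n !
  have hdvd : p * (p ^ 2 * Nat.factorial (n - p ^ 2)) ∣ Nat.factorial n := by
    have h1 : p ^ 3 ∣ Nat.factorial (3 * p) := pow_dvd_factorial_mul hp.pos 3
    have h2 : Nat.factorial (3 * p) ∣ Nat.factorial (p ^ 2) :=
      Nat.factorial_dvd_factorial (by nlinarith)
    have h3 : p ^ 3 * Nat.factorial (n - p ^ 2) ∣
        Nat.factorial (p ^ 2) * Nat.factorial (n - p ^ 2) :=
      mul_dvd_mul_right (h1.trans h2) _
    have h4 : Nat.factorial (p ^ 2) * Nat.factorial (n - p ^ 2) ∣ Nat.factorial n :=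
      Nat.factorial_mul_factorial_dvd_factorial hn
    calc p * (p ^ 2 * Nat.factorial (n - p ^ 2)) = p ^ 3 * Nat.factorial (n - p ^ 2) := by ring
    _ ∣ Nat.factorial n := h3.trans h4
  rw [← hmul] at hdvd
  have hpos : 0 < p ^ 2 * Nat.factorial (n - p ^ 2) :=
    Nat.mul_pos (Nat.pow_pos hp.pos) (Nat.factorial_pos _)
  have : (p ^ 2 * Nat.factorial (n - p ^ 2)) * p ∣
      (p ^ 2 * Nat.factorial (n - p ^ 2)) * (Subgroup.centralizer {σ}).index := by
    calc (p ^ 2 * Nat.factorial (n - p ^ 2)) * p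
        = p * (p ^ 2 * Nat.factorial (n - p ^ 2)) := by ring
    _ ∣ _ := hdvd
  exact (Nat.mul_dvd_mul_iff_left hpos).mp this


/-- A group `G` is `cl_p` if its Sylow `p`-subgroups are non-abelian and every `p`-element
of `G` has conjugacy class size coprime to `p`. -/
def IsClP (p : ℕ) (G : Type*) [Group G] : Prop :=
  (∀ P : Sylow p G, ¬ IsMulCommutative ↥(P : Subgroup G)) ∧
  ∀ x : G, (∃ n : ℕ, orderOf x = p ^ n) → ¬ p ∣ (Subgroup.centralizer {x}).index

lemma alternating_not_clp_aux {p : ℕ} (hp : p.Prime) (hodd : Odd p) (m : ℕ) :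
    ¬ IsClP p (alternatingGroup (Fin m)) := by
  haveI : Fact p.Prime := ⟨hp⟩
  have hpne2 : p ≠ 2 := by
    rintro rfl
    exact (Nat.not_odd_iff_even.mpr even_two) hodd
  have hp3 : 3 ≤ p := by
    have := hp.two_le
    omega
  rintro ⟨h1, h2⟩
  by_cases hm : m < p ^ 2
  · -- Sylow subgroups are abelian
    obtain ⟨P⟩ : Nonempty (Sylow p (alternatingGroup (Fin m))) := inferInstance
    apply h1 P
    constructor
    constructor
    intro a b
    have hQ : IsPGroup p ((P : Subgroup (alternatingGroup (Fin m))).map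
        (alternatingGroup (Fin m)).subtype) := P.2.map _
    have key := comm_of_small hp hm _ hQ
      ⟨((a : alternatingGroup (Fin m)) : Perm (Fin m)), ⟨a, a.2, rfl⟩⟩
      ⟨((b : alternatingGroup (Fin m)) : Perm (Fin m)), ⟨b, b.2, rfl⟩⟩
    have key2 := congrArg Subtype.val key
    simp only [Subgroup.coe_mul, MulMemClass.mk_mul_mk] at key2
    apply Subtype.ext
    apply Subtype.ext
    push_cast
    exact key2
  · push_neg at hm
    -- construct a p²-cycle
    have h2m : 2 ≤ m := by nlinarith
    set l : List (Fin m) := (List.finRange (p ^ 2)).map (Fin.castLE hm) with hl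
    have hnd : l.Nodup := (List.nodup_finRange _).map (Fin.castLE_injective hm)
    have hlen : l.length = p ^ 2 := by simp [hl]
    have hlen2 : 2 ≤ l.length := by rw [hlen]; nlinarith
    have hne : ∀ x : Fin m, l ≠ [x] := by
      intro x hx
      rw [hx] at hlen
      simp at hlen
      nlinarith
    set σ : Perm (Fin m) := l.formPerm with hσdef
    have hc : σ.IsCycle := List.isCycle_formPerm hnd hlen2
    have hsupp : σ.support = l.toFinset := List.support_formPerm_of_nodup l hnd hne
    have hcard : σ.support.card = p ^ 2 := by
      rw [hsupp, List.card_toFinset, hnd.dedup, hlen]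
    have hmem : σ ∈ alternatingGroup (Fin m) := by
      rw [Equiv.Perm.mem_alternatingGroup, hc.sign, hcard,
        Odd.neg_one_pow (hodd.pow), neg_neg]
    set x : alternatingGroup (Fin m) := ⟨σ, hmem⟩ with hx
    have horderx : orderOf x = p ^ 2 := by
      rw [← orderOf_injective (alternatingGroup (Fin m)).subtype Subtype.coe_injective x]
      show orderOf σ = p ^ 2
      exact hc.orderOf.trans hcard
    apply h2 x ⟨2, horderx⟩
    -- p divides the index of the centralizer in Aₘ
    set K := (Subgroup.centralizer {σ} : Subgroup (Perm (Fin m))) with hK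
    have hKdvd : p ∣ K.index := p_dvd_centralizer_index hp hp3 hm σ hc hcard
    have hsub : Subgroup.centralizer {x} = K.subgroupOf (alternatingGroup (Fin m)) := by
      ext a
      rw [Subgroup.mem_subgroupOf, Subgroup.mem_centralizer_singleton_iff,
        Subgroup.mem_centralizer_singleton_iff]
      rw [Subtype.ext_iff]
      push_cast
      rfl
    haveI : Nontrivial (Fin m) := Fin.nontrivial_iff_two_le.mpr h2m
    have hA2 : (alternatingGroup (Fin m)).index = 2 := by
      have hmul := Subgroup.card_mul_index (alternatingGroup (Fin m))
      have h2c : 2 * Fintype.card (alternatingGroup (Fin m))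
          = Fintype.card (Perm (Fin m)) := two_mul_card_alternatingGroup
      rw [Nat.card_eq_fintype_card, Nat.card_eq_fintype_card, ← h2c, mul_comm] at hmul
      have hpos : 0 < Fintype.card (alternatingGroup (Fin m)) := Fintype.card_pos
      exact Nat.eq_of_mul_eq_mul_left hpos (by linarith)
    have hchain : K.index ∣ (Subgroup.centralizer {x}).index * 2 := by
      have e1 : K.index ∣ (K ⊓ alternatingGroup (Fin m)).index :=
        Subgroup.index_dvd_of_le inf_le_left
      have e2 : (K ⊓ alternatingGroup (Fin m)).relIndex (alternatingGroup (Fin m))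
          * (alternatingGroup (Fin m)).index = (K ⊓ alternatingGroup (Fin m)).index :=
        Subgroup.relIndex_mul_index inf_le_right
      rw [Subgroup.inf_relIndex_right, hA2] at e2
      have e3 : K.relIndex (alternatingGroup (Fin m)) = (Subgroup.centralizer {x}).index := by
        rw [hsub]
        rfl
      rw [e3] at e2
      rw [← e2] at e1
      exact e1
    have hp2 : Nat.Coprime p 2 := by
      rw [Nat.coprime_primes hp Nat.prime_two] at *
      · omega
    exact (hp2.dvd_of_dvd_mul_right (hKdvd.trans hchain))


/-- For an odd prime `p` and `n ≥ p²`, a cycle `σ` of length `p²` in `S_n` has centralizer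
isomorphic to `C_{p²} × S_{n-p²}`, its class size is divisible by `p`, and consequently no
alternating group is `cl_p`. -/
theorem alternating_not_clp (p n : ℕ) (hp : p.Prime) (hodd : Odd p) (hn : p ^ 2 ≤ n)
    (σ : Equiv.Perm (Fin n)) (hσ : σ.IsCycle) (hcard : σ.support.card = p ^ 2) :
    Nonempty ((Subgroup.centralizer {σ} : Subgroup (Equiv.Perm (Fin n))) ≃*
        Multiplicative (ZMod (p ^ 2)) × Equiv.Perm (Fin (n - p ^ 2))) ∧
    p ∣ (Subgroup.centralizer {σ} : Subgroup (Equiv.Perm (Fin n))).index ∧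
    ∀ m : ℕ, ¬ IsClP p (alternatingGroup (Fin m)) := by
  have hpne2 : p ≠ 2 := by
    rintro rfl
    exact (Nat.not_odd_iff_even.mpr even_two) hodd
  have hp3 : 3 ≤ p := by
    have := hp.two_le
    omega
  exact ⟨centralizer_cycle_iso hp hn σ hσ hcard,
    p_dvd_centralizer_index hp hp3 hn σ hσ hcard,
    fun m => alternating_not_clp_aux hp hodd m⟩
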